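/- Let (X, ‖·‖) be a real normed linear space, T : X → X a mapping, k ∈ (0, ∞), a ∈ [0, 1/2), and set λ = 1/(k+1) ∈ (0, 1). Then T is a (k, a)-enriched Kannan mapping (i.e., ‖k(x−y) + Tx − Ty‖ ≤ a·(‖x − Tx‖ + ‖y − Ty‖) for all x, y ∈ X) if and only if the averaged mapping T_λ(x) = (1−λ)x + λT(x) is a Kannan mapping with constant a, i.e., ‖T_λx − T_λy‖ ≤ a·(‖x − T_λx‖ + ‖y − T_λy‖) for all x, y ∈ X. -/

import Mathlib

/-- `T` is a `(k, a)`-enriched Kannan mapping iff the averaged mapping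
`T_λ`, `λ = 1/(k+1)`, is a Kannan mapping with constant `a`. -/
theorem enrichedKannan_iff_averaged_kannan
    {X : Type*} [NormedAddCommGroup X] [NormedSpace ℝ X]
    (T : X → X) (k a : ℝ) (hk : 0 < k) (ha0 : 0 ≤ a) (ha : a < 1 / 2) :
    (∀ x y : X, ‖k • (x - y) + (T x - T y)‖ ≤ a * (‖x - T x‖ + ‖y - T y‖)) ↔
      (∀ x y : X,
        ‖((1 - 1 / (k + 1)) • x + (1 / (k + 1)) • T x) -
            ((1 - 1 / (k + 1)) • y + (1 / (k + 1)) • T y)‖ ≤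
          a * (‖x - ((1 - 1 / (k + 1)) • x + (1 / (k + 1)) • T x)‖ +
               ‖y - ((1 - 1 / (k + 1)) • y + (1 / (k + 1)) • T y)‖)) := by
  have hk1 : (0:ℝ) < k + 1 := by linarith
  set c : ℝ := 1 / (k + 1) with hc
  have hcpos : 0 < c := by positivity
  have hck : c * k = 1 - c := by rw [hc]; field_simp; ring
  have h1 : ∀ x y : X,
      ((1 - c) • x + c • T x) - ((1 - c) • y + c • T y)
        = c • (k • (x - y) + (T x - T y)) := by
    intro x y
    rw [← hck]
    module
  have h2 : ∀ x : X, x - ((1 - c) • x + c • T x) = c • (x - T x) := by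
    intro x; module
  have hnorm : ∀ v : X, ‖c • v‖ = c * ‖v‖ := by
    intro v
    rw [norm_smul, Real.norm_eq_abs, abs_of_pos hcpos]
  constructor
  · intro h x y
    rw [h1, h2, h2, hnorm, hnorm, hnorm]
    calc c * ‖k • (x - y) + (T x - T y)‖
        ≤ c * (a * (‖x - T x‖ + ‖y - T y‖)) := by
          exact mul_le_mul_of_nonneg_left (h x y) hcpos.le
      _ = a * (c * ‖x - T x‖ + c * ‖y - T y‖) := by ring
  · intro h x y
    have := h x y
    rw [h1, h2, h2, hnorm, hnorm, hnorm] at this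
    have h' : c * ‖k • (x - y) + (T x - T y)‖ ≤ c * (a * (‖x - T x‖ + ‖y - T y‖)) := by
      nlinarith
    exact le_of_mul_le_mul_left h' hcpos
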